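/- Let (L, [·,·], α) be a multiplicative Hom-Lie superalgebra and let r = Σ r₁⊗r₂ ∈ L⊗L be an even element (|r₁| = |r₂| for each summand) with α^{⊗2}(r) = r. Then Δ = ad(r) : L → L⊗L, Δ(x) = ad_x(r), satisfies the 1-cocycle (compatibility) condition: ad_{[x,y]}(r) = ad_{α(x)}(ad_y(r)) − (−1)^{|x||y|} ad_{α(y)}(ad_x(r)) for all homogeneous x, y ∈ L. -/
import Mathlib


open TensorProduct

variable (K : Type*) [Field K] [CharZero K]

/-- The super sign `(-1)^{p·q}` for parities `p q : ZMod 2`. -/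
def eps (p q : ZMod 2) : K := (-1 : K) ^ (p.val * q.val)

variable {K}

section Defs

variable {L M : Type*} [AddCommGroup L] [Module K L] [AddCommGroup M] [Module K M]

/-- `x` is homogeneous of parity `p` with respect to the grading involution `σ`
(`σ` acts as `(-1)^i` on the degree-`i` part of the `ℤ₂`-graded space). -/
def IsHomog (σ : L →ₗ[K] L) (p : ZMod 2) (x : L) : Prop :=
  σ x = ((-1 : K) ^ p.val) • x

/-- The operator multiplying a homogeneous element of parity `q` by `(-1)^{p·q}`. -/
noncomputable def signPow (σ : L →ₗ[K] L) (p : ZMod 2) : L →ₗ[K] L :=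
  ((2 : K)⁻¹ * (1 + (-1 : K) ^ p.val)) • (LinearMap.id : L →ₗ[K] L)
    + ((2 : K)⁻¹ * (1 - (-1 : K) ^ p.val)) • σ

/-- The operator multiplying `x ⊗ y` (with `x, y` homogeneous of parities `p, q`)
by the Koszul sign `(-1)^{p·q}`. -/
noncomputable def signOp (σL : L →ₗ[K] L) (σM : M →ₗ[K] M) :
    L ⊗[K] M →ₗ[K] L ⊗[K] M :=
  (2 : K)⁻¹ • ((LinearMap.id : L ⊗[K] M →ₗ[K] L ⊗[K] M)
    + TensorProduct.map σL LinearMap.id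
    + TensorProduct.map LinearMap.id σM
    - TensorProduct.map σL σM)

/-- The super twist `τ(x ⊗ y) = (-1)^{|x||y|} y ⊗ x`. -/
noncomputable def superTwist (σ : L →ₗ[K] L) : L ⊗[K] L →ₗ[K] L ⊗[K] L :=
  (TensorProduct.comm K L L).toLinearMap ∘ₗ signOp σ σ

/-- The super cyclic map `ξ(x ⊗ y ⊗ z) = (-1)^{|x|(|y|+|z|)} y ⊗ z ⊗ x`. -/
noncomputable def superCyclic (σ : L →ₗ[K] L) :
    L ⊗[K] (L ⊗[K] L) →ₗ[K] L ⊗[K] (L ⊗[K] L) :=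
  (TensorProduct.assoc K L L L).toLinearMap
    ∘ₗ (TensorProduct.comm K L (L ⊗[K] L)).toLinearMap
    ∘ₗ signOp σ (TensorProduct.map σ σ)

/-- The adjoint action `ad_x` on `L ⊗ L`, for `x` homogeneous of parity `p`:
`ad_x(y₁ ⊗ y₂) = [x,y₁] ⊗ α(y₂) + (-1)^{|x||y₁|} α(y₁) ⊗ [x,y₂]`. -/
noncomputable def adT (σ : L →ₗ[K] L) (br : L →ₗ[K] L →ₗ[K] L) (α : L →ₗ[K] L)
    (p : ZMod 2) (x : L) : L ⊗[K] L →ₗ[K] L ⊗[K] L :=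
  TensorProduct.map (br x) α + TensorProduct.map (α ∘ₗ signPow σ p) (br x)

/-- The adjoint action `ad_x` on `L ⊗ (L ⊗ L)`, for `x` homogeneous of parity `p`. -/
noncomputable def adT3 (σ : L →ₗ[K] L) (br : L →ₗ[K] L →ₗ[K] L) (α : L →ₗ[K] L)
    (p : ZMod 2) (x : L) :
    L ⊗[K] (L ⊗[K] L) →ₗ[K] L ⊗[K] (L ⊗[K] L) :=
  TensorProduct.map (br x) (TensorProduct.map α α)
    + TensorProduct.map (α ∘ₗ signPow σ p) (TensorProduct.map (br x) α)
    + TensorProduct.map (α ∘ₗ signPow σ p)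
        (TensorProduct.map (α ∘ₗ signPow σ p) (br x))

/-- A Hom-Lie superalgebra `(L, [·,·], α)` with grading involution `σ`:
the bracket and `α` are even, the bracket is skew-supersymmetric and
satisfies the Hom-super-Jacobi identity. -/
def IsHomLieSuperalgebra (σ : L →ₗ[K] L) (br : L →ₗ[K] L →ₗ[K] L) (α : L →ₗ[K] L) : Prop :=
  σ ∘ₗ σ = LinearMap.id
  ∧ (∀ x y, σ (br x y) = br (σ x) (σ y))
  ∧ (∀ x, σ (α x) = α (σ x))
  ∧ (∀ p q x y, IsHomog σ p x → IsHomog σ q y → br x y = -(eps K p q) • br y x)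
  ∧ (∀ p q r x y z, IsHomog σ p x → IsHomog σ q y → IsHomog σ r z →
      eps K p r • br (α x) (br y z) + eps K r q • br (α z) (br x y)
        + eps K q p • br (α y) (br z x) = 0)

/-- Multiplicativity: `α([x,y]) = [α(x), α(y)]`. -/
def IsMultiplicative (br : L →ₗ[K] L →ₗ[K] L) (α : L →ₗ[K] L) : Prop :=
  ∀ x y, α (br x y) = br (α x) (α y)

/-- A Hom-Lie supercoalgebra `(L, Δ, α)` with grading involution `σ`. -/
def IsHomLieSupercoalgebra (σ α : L →ₗ[K] L) (Δ : L →ₗ[K] L ⊗[K] L) : Prop :=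
  σ ∘ₗ σ = LinearMap.id
  ∧ (∀ x, σ (α x) = α (σ x))
  ∧ TensorProduct.map σ σ ∘ₗ Δ = Δ ∘ₗ σ
  ∧ (∀ x, ∃ u, Δ x = u - superTwist σ u)
  ∧ (LinearMap.id + superCyclic σ + superCyclic σ ∘ₗ superCyclic σ)
      ∘ₗ TensorProduct.map α Δ ∘ₗ Δ = 0

/-- Co-multiplicativity: `Δ ∘ α = α^{⊗2} ∘ Δ`. -/
def IsComultiplicative (α : L →ₗ[K] L) (Δ : L →ₗ[K] L ⊗[K] L) : Prop :=
  Δ ∘ₗ α = TensorProduct.map α α ∘ₗ Δ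

/-- A Hom-Lie superbialgebra `(L, [·,·], Δ, α)`. -/
def IsHomLieSuperbialgebra (σ : L →ₗ[K] L) (br : L →ₗ[K] L →ₗ[K] L) (α : L →ₗ[K] L)
    (Δ : L →ₗ[K] L ⊗[K] L) : Prop :=
  IsHomLieSuperalgebra σ br α
  ∧ IsHomLieSupercoalgebra σ α Δ
  ∧ ∀ p q x y, IsHomog σ p x → IsHomog σ q y →
      Δ (br x y) = adT σ br α p (α x) (Δ y) - eps K p q • adT σ br α q (α y) (Δ x)

/-- A multiplicative Hom-Lie superbialgebra. -/
def IsMultHomLieSuperbialgebra (σ : L →ₗ[K] L) (br : L →ₗ[K] L →ₗ[K] L) (α : L →ₗ[K] L)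
    (Δ : L →ₗ[K] L ⊗[K] L) : Prop :=
  IsHomLieSuperbialgebra σ br α Δ ∧ IsMultiplicative br α ∧ IsComultiplicative α Δ

/-- An admissible Hom-Lie superalgebra: `[(Id - α²)(x), α(y)] = 0`. -/
def IsAdmissible (σ : L →ₗ[K] L) (br : L →ₗ[K] L →ₗ[K] L) (α : L →ₗ[K] L) : Prop :=
  IsHomLieSuperalgebra σ br α ∧ ∀ x y, br (x - α (α x)) (α y) = 0

/-- A morphism of Hom-Lie superbialgebras: an even linear map commuting with the
twist maps, the brackets and the cobrackets. -/
def IsBialgMorphism {L₂ : Type*} [AddCommGroup L₂] [Module K L₂]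
    (σ₁ : L →ₗ[K] L) (br₁ : L →ₗ[K] L →ₗ[K] L) (α₁ : L →ₗ[K] L) (Δ₁ : L →ₗ[K] L ⊗[K] L)
    (σ₂ : L₂ →ₗ[K] L₂) (br₂ : L₂ →ₗ[K] L₂ →ₗ[K] L₂) (α₂ : L₂ →ₗ[K] L₂)
    (Δ₂ : L₂ →ₗ[K] L₂ ⊗[K] L₂) (f : L →ₗ[K] L₂) : Prop :=
  (∀ x, σ₂ (f x) = f (σ₁ x)) ∧ (∀ x, α₂ (f x) = f (α₁ x))
  ∧ (∀ x y, f (br₁ x y) = br₂ (f x) (f y))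
  ∧ TensorProduct.map f f ∘ₗ Δ₁ = Δ₂ ∘ₗ f

/-- A representation `ρ` of the Hom-Lie superalgebra `(L, br, αg)` on `(M, σM)`
with respect to `A`. -/
def IsRepresentation (σg : L →ₗ[K] L) (br : L →ₗ[K] L →ₗ[K] L) (αg : L →ₗ[K] L)
    (σM A : M →ₗ[K] M) (ρ : L →ₗ[K] M →ₗ[K] M) : Prop :=
  (∀ x v, σM (ρ x v) = ρ (σg x) (σM v))
  ∧ (∀ x, ρ (αg x) ∘ₗ A = A ∘ₗ ρ x)
  ∧ (∀ p q x y, IsHomog σg p x → IsHomog σg q y →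
      ρ (br x y) ∘ₗ A = ρ (αg x) ∘ₗ ρ y - eps K p q • (ρ (αg y) ∘ₗ ρ x))

/-- The signed middle-four interchange
`(r₁ ⊗ r₂) ⊗ (r₁' ⊗ r₂') ↦ (-1)^{|r₂||r₁'|} (r₁ ⊗ r₁') ⊗ (r₂ ⊗ r₂')`. -/
noncomputable def signedMidSwap (σ : L →ₗ[K] L) :
    (L ⊗[K] L) ⊗[K] (L ⊗[K] L) →ₗ[K] (L ⊗[K] L) ⊗[K] (L ⊗[K] L) :=
  (TensorProduct.assoc K (L ⊗[K] L) L L).toLinearMap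
    ∘ₗ TensorProduct.map (TensorProduct.assoc K L L L).symm.toLinearMap LinearMap.id
    ∘ₗ TensorProduct.map (TensorProduct.map LinearMap.id (superTwist σ)) LinearMap.id
    ∘ₗ TensorProduct.map (TensorProduct.assoc K L L L).toLinearMap LinearMap.id
    ∘ₗ (TensorProduct.assoc K (L ⊗[K] L) L L).symm.toLinearMap

/-- `[r₁₂, r'₁₃] = Σ (-1)^{|r'₁||r₂|} [r₁,r'₁] ⊗ α(r₂) ⊗ α(r'₂)`. -/
noncomputable def br1213 (σ : L →ₗ[K] L) (br : L →ₗ[K] L →ₗ[K] L) (α : L →ₗ[K] L)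
    (r r' : L ⊗[K] L) : L ⊗[K] (L ⊗[K] L) :=
  TensorProduct.map (TensorProduct.lift br) (TensorProduct.map α α)
    (signedMidSwap σ (r ⊗ₜ[K] r'))

/-- `[r₁₂, r'₂₃] = Σ α(r₁) ⊗ [r₂,r'₁] ⊗ α(r'₂)`. -/
noncomputable def br1223 (br : L →ₗ[K] L →ₗ[K] L) (α : L →ₗ[K] L)
    (r r' : L ⊗[K] L) : L ⊗[K] (L ⊗[K] L) :=
  TensorProduct.map α
      (TensorProduct.map (TensorProduct.lift br) α
        ∘ₗ (TensorProduct.assoc K L L L).symm.toLinearMap)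
    ((TensorProduct.assoc K L L (L ⊗[K] L)).toLinearMap (r ⊗ₜ[K] r'))

/-- `[r₁₃, r'₂₃] = Σ (-1)^{|r'₁||r₂|} α(r₁) ⊗ α(r'₁) ⊗ [r₂,r'₂]`. -/
noncomputable def br1323 (σ : L →ₗ[K] L) (br : L →ₗ[K] L →ₗ[K] L) (α : L →ₗ[K] L)
    (r r' : L ⊗[K] L) : L ⊗[K] (L ⊗[K] L) :=
  (TensorProduct.assoc K L L L).toLinearMap
    (TensorProduct.map (TensorProduct.map α α) (TensorProduct.lift br)
      (signedMidSwap σ (r ⊗ₜ[K] r')))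

/-- The left-hand side `[[r,r]]^α` of the classical Hom-Yang-Baxter equation. -/
noncomputable def chybeEl (σ : L →ₗ[K] L) (br : L →ₗ[K] L →ₗ[K] L) (α : L →ₗ[K] L)
    (r : L ⊗[K] L) : L ⊗[K] (L ⊗[K] L) :=
  br1213 σ br α r r + br1223 br α r r + br1323 σ br α r r

/-- A coboundary Hom-Lie superbialgebra. -/
def IsCoboundary (σ : L →ₗ[K] L) (br : L →ₗ[K] L →ₗ[K] L) (α : L →ₗ[K] L)
    (Δ : L →ₗ[K] L ⊗[K] L) (r : L ⊗[K] L) : Prop :=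
  IsHomLieSuperbialgebra σ br α Δ
  ∧ TensorProduct.map α α r = r
  ∧ ∀ p x, IsHomog σ p x → Δ x = adT σ br α p x r

/-- A quasi-triangular Hom-Lie superbialgebra: a coboundary one where `r`
satisfies the classical Hom-Yang-Baxter equation. -/
def IsQuasiTriangular (σ : L →ₗ[K] L) (br : L →ₗ[K] L →ₗ[K] L) (α : L →ₗ[K] L)
    (Δ : L →ₗ[K] L ⊗[K] L) (r : L ⊗[K] L) : Prop :=
  IsCoboundary σ br α Δ r ∧ chybeEl σ br α r = 0

/-- The global linear map `x ↦ ad_x(r) = Σ [x,r₁] ⊗ α(r₂) + (-1)^{|x||r₁|} α(r₁) ⊗ [x,r₂]`. -/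
noncomputable def adMap (σ : L →ₗ[K] L) (br : L →ₗ[K] L →ₗ[K] L) (α : L →ₗ[K] L)
    (r : L ⊗[K] L) : L →ₗ[K] L ⊗[K] L :=
  (TensorProduct.map (TensorProduct.lift br) α
      ∘ₗ (TensorProduct.assoc K L L L).symm.toLinearMap
    + TensorProduct.map α (TensorProduct.lift br)
        ∘ₗ (TensorProduct.assoc K L L L).toLinearMap
        ∘ₗ TensorProduct.map (superTwist σ) LinearMap.id
        ∘ₗ (TensorProduct.assoc K L L L).symm.toLinearMap)
  ∘ₗ (TensorProduct.mk K L (L ⊗[K] L)).flip r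

end Defs

section Aux
variable {L : Type*} [AddCommGroup L] [Module K L]
variable {σ : L →ₗ[K] L} {br : L →ₗ[K] L →ₗ[K] L} {α : L →ₗ[K] L}

lemma zmod2_cases : ∀ r : ZMod 2, r = 0 ∨ r = 1 := by decide
lemma zv1 : (1 : ZMod 2).val = 1 := rfl
lemma zv0 : (0 : ZMod 2).val = 0 := rfl

lemma Lsign {m p : ZMod 2} {u : L} (hu : IsHomog σ m u) :
    signPow σ p u = eps K p m • u := by
  have : σ u = ((-1 : K) ^ m.val) • u := hu
  simp only [signPow, LinearMap.add_apply, LinearMap.smul_apply, LinearMap.id_apply, this,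
    smul_smul]
  rw [← add_smul]
  congr 1
  rcases zmod2_cases p with rfl|rfl <;> rcases zmod2_cases m with rfl|rfl <;>
    simp [eps, zv0, zv1] <;> norm_num

lemma homog_alpha {m : ZMod 2} {a : L} (hσα : ∀ z, σ (α z) = α (σ z))
    (ha : IsHomog σ m a) : IsHomog σ m (α a) := by
  unfold IsHomog at *
  rw [hσα, ha, map_smul]

lemma homog_br {p m : ZMod 2} {x a : L} (hσbr : ∀ u v, σ (br u v) = br (σ u) (σ v))
    (hx : IsHomog σ p x) (ha : IsHomog σ m a) : IsHomog σ (p + m) (br x a) := by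
  unfold IsHomog at *
  rw [hσbr, hx, ha, map_smul, map_smul, LinearMap.smul_apply, smul_smul]
  congr 1
  rcases zmod2_cases p with rfl|rfl <;> rcases zmod2_cases m with rfl|rfl <;>
    simp [show (1+1 : ZMod 2) = 0 from rfl, zv0, zv1]

end Aux

section Jac
variable {L : Type*} [AddCommGroup L] [Module K L]
variable {σ : L →ₗ[K] L} {br : L →ₗ[K] L →ₗ[K] L} {α : L →ₗ[K] L}

lemma JopH (hσσ : σ ∘ₗ σ = LinearMap.id)
    (hσbr : ∀ u v, σ (br u v) = br (σ u) (σ v))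
    (hσα : ∀ z, σ (α z) = α (σ z))
    (hskew : ∀ p q x y, IsHomog σ p x → IsHomog σ q y → br x y = -(eps K p q) • br y x)
    (hjac : ∀ p q r x y z, IsHomog σ p x → IsHomog σ q y → IsHomog σ r z →
      eps K p r • br (α x) (br y z) + eps K r q • br (α z) (br x y)
        + eps K q p • br (α y) (br z x) = 0)
    {p q rd : ZMod 2} {x y z : L}
    (hx : IsHomog σ p x) (hy : IsHomog σ q y) (hz : IsHomog σ rd z) :
    br (br x y) (α z) = br (α x) (br y z) - eps K p q • br (α y) (br x z) := by
  have hxy : IsHomog σ (p + q) (br x y) := homog_br hσbr hx hy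
  have hαz : IsHomog σ rd (α z) := homog_alpha hσα hz
  have h1 := hjac p q rd x y z hx hy hz
  have s1 := hskew (p + q) rd (br x y) (α z) hxy hαz
  have h2 : br (α y) (br z x) = -eps K rd p • br (α y) (br x z) := by
    rw [hskew rd p z x hz hx]; simp
  rw [h2] at h1
  rw [s1]
  rcases zmod2_cases p with rfl|rfl <;> rcases zmod2_cases q with rfl|rfl <;>
    rcases zmod2_cases rd with rfl|rfl <;>
    simp only [eps, zv0, zv1, show (1+1 : ZMod 2) = 0 from rfl, show (0+1 : ZMod 2) = 1 from rfl,
      show (1+0 : ZMod 2) = 1 from rfl, show (0+0 : ZMod 2) = 0 from rfl,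
      Nat.mul_zero, Nat.zero_mul,
      Nat.mul_one, Nat.one_mul, pow_zero, pow_one, one_smul, neg_neg, neg_smul, neg_one_smul] at h1 ⊢ <;>
    first
      | linear_combination (norm := module) h1
      | linear_combination (norm := module) -h1

lemma Jop (hσσ : σ ∘ₗ σ = LinearMap.id)
    (hσbr : ∀ u v, σ (br u v) = br (σ u) (σ v))
    (hσα : ∀ z, σ (α z) = α (σ z))
    (hskew : ∀ p q x y, IsHomog σ p x → IsHomog σ q y → br x y = -(eps K p q) • br y x)
    (hjac : ∀ p q r x y z, IsHomog σ p x → IsHomog σ q y → IsHomog σ r z →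
      eps K p r • br (α x) (br y z) + eps K r q • br (α z) (br x y)
        + eps K q p • br (α y) (br z x) = 0)
    {p q : ZMod 2} {x y : L} (hx : IsHomog σ p x) (hy : IsHomog σ q y) (z : L) :
    br (br x y) (α z) = br (α x) (br y z) - eps K p q • br (α y) (br x z) := by
  have hσσ' : ∀ u, σ (σ u) = u := fun u => congrArg (· u) hσσ
  set z0 := (2 : K)⁻¹ • (z + σ z) with hz0def
  set z1 := (2 : K)⁻¹ • (z - σ z) with hz1def
  have hz0 : IsHomog σ 0 z0 := by
    unfold IsHomog
    rw [hz0def, map_smul, map_add, hσσ', zv0, pow_zero, one_smul, add_comm]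
  have hz1 : IsHomog σ 1 z1 := by
    unfold IsHomog
    rw [hz1def, map_smul, map_sub, hσσ', zv1, pow_one]
    match_scalars <;> ring
  have hz : z = z0 + z1 := by
    rw [hz0def, hz1def]; match_scalars <;> norm_num
  rw [hz]
  simp only [map_add]
  rw [JopH hσσ hσbr hσα hskew hjac hx hy hz0, JopH hσσ hσbr hσα hskew hjac hx hy hz1]
  module

end Jac

section Key
variable {L : Type*} [AddCommGroup L] [Module K L]
variable {σ : L →ₗ[K] L} {br : L →ₗ[K] L →ₗ[K] L} {α : L →ₗ[K] L}

lemma adT_tmul (p : ZMod 2) (x u v : L) :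
    adT σ br α p x (u ⊗ₜ[K] v) = br x u ⊗ₜ[K] α v + α (signPow σ p u) ⊗ₜ[K] br x v := by
  simp [adT]

lemma adT_tmul_homog {m : ZMod 2} {u : L} (p : ZMod 2) (x : L) (v : L)
    (hu : IsHomog σ m u) :
    adT σ br α p x (u ⊗ₜ[K] v)
      = br x u ⊗ₜ[K] α v + eps K p m • (α u ⊗ₜ[K] br x v) := by
  rw [adT_tmul, Lsign hu, map_smul, smul_tmul']

lemma key_pure
    (hσσ : σ ∘ₗ σ = LinearMap.id)
    (hσbr : ∀ u v, σ (br u v) = br (σ u) (σ v))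
    (hσα : ∀ z, σ (α z) = α (σ z))
    (hskew : ∀ p q x y, IsHomog σ p x → IsHomog σ q y → br x y = -(eps K p q) • br y x)
    (hjac : ∀ p q r x y z, IsHomog σ p x → IsHomog σ q y → IsHomog σ r z →
      eps K p r • br (α x) (br y z) + eps K r q • br (α z) (br x y)
        + eps K q p • br (α y) (br z x) = 0)
    (hmult : ∀ u v, α (br u v) = br (α u) (α v))
    {p q m : ZMod 2} {x y a : L} (hx : IsHomog σ p x) (hy : IsHomog σ q y)
    (ha : IsHomog σ m a) (b : L) :
    adT σ br α (p + q) (br x y) (TensorProduct.map α α (a ⊗ₜ[K] b))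
      = adT σ br α p (α x) (adT σ br α q y (a ⊗ₜ[K] b))
        - eps K p q • adT σ br α q (α y) (adT σ br α p x (a ⊗ₜ[K] b)) := by
  have hαa : IsHomog σ m (α a) := homog_alpha hσα ha
  have hya : IsHomog σ (q + m) (br y a) := homog_br hσbr hy ha
  have hxa : IsHomog σ (p + m) (br x a) := homog_br hσbr hx ha
  have J := Jop hσσ hσbr hσα hskew hjac hx hy
  rw [TensorProduct.map_tmul,
    adT_tmul_homog (p + q) (br x y) (α b) hαa,
    adT_tmul_homog q y b ha, adT_tmul_homog p x b ha,
    map_add, map_smul, map_add, map_smul,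
    adT_tmul_homog p (α x) (α b) hya,
    adT_tmul_homog p (α x) (br y b) hαa,
    adT_tmul_homog q (α y) (α b) hxa,
    adT_tmul_homog q (α y) (br x b) hαa,
    J a, J b,
    hmult y a, hmult x a, hmult y b, hmult x b]
  rcases zmod2_cases p with rfl|rfl <;> rcases zmod2_cases q with rfl|rfl <;>
    rcases zmod2_cases m with rfl|rfl <;>
    simp only [eps, zv0, zv1, show (1+1 : ZMod 2) = 0 from rfl,
      show (0+1 : ZMod 2) = 1 from rfl, show (1+0 : ZMod 2) = 1 from rfl,
      show (0+0 : ZMod 2) = 0 from rfl, Nat.mul_zero, Nat.zero_mul, Nat.mul_one, Nat.one_mul,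
      pow_zero, pow_one, one_smul, neg_neg, neg_smul, neg_one_smul,
      sub_tmul, tmul_sub, smul_sub, neg_tmul, tmul_neg, tmul_smul, smul_tmul'] <;>
    module

end Key


/-- For a multiplicative Hom-Lie superalgebra and an even
`α^{⊗2}`-invariant element `r`, the map `Δ = ad(r)` satisfies the 1-cocycle
(compatibility) condition. -/
theorem adjoint_of_r_is_cocycle
    {K : Type*} [Field K] [CharZero K] {L : Type*} [AddCommGroup L] [Module K L]
    (σ : L →ₗ[K] L) (br : L →ₗ[K] L →ₗ[K] L) (α : L →ₗ[K] L)
    (halg : IsHomLieSuperalgebra σ br α) (hmult : IsMultiplicative br α)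
    (r : L ⊗[K] L)
    (hrα : TensorProduct.map α α r = r)
    -- `r` is even, i.e. `|r₁| = |r₂|` for each summand:
    (hreven : TensorProduct.map σ σ r = r) :
    ∀ (p q : ZMod 2) (x y : L), IsHomog σ p x → IsHomog σ q y →
      adT σ br α (p + q) (br x y) r
        = adT σ br α p (α x) (adT σ br α q y r)
          - eps K p q • adT σ br α q (α y) (adT σ br α p x r) := by
  intro p q x y hx hy
  obtain ⟨hσσ, hσbr, hσα, hskew, hjac⟩ := halg
  have hσσ' : ∀ u, σ (σ u) = u := fun u => congrArg (· u) hσσ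
  conv_lhs => rw [← hrα]
  suffices h : ∀ t : L ⊗[K] L,
      adT σ br α (p + q) (br x y) (TensorProduct.map α α t)
        = adT σ br α p (α x) (adT σ br α q y t)
          - eps K p q • adT σ br α q (α y) (adT σ br α p x t) from h r
  intro t
  induction t using TensorProduct.induction_on with
  | zero => simp
  | tmul a b =>
    set a0 := (2 : K)⁻¹ • (a + σ a) with ha0def
    set a1 := (2 : K)⁻¹ • (a - σ a) with ha1def
    have ha0 : IsHomog σ 0 a0 := by
      unfold IsHomog
      rw [ha0def, map_smul, map_add, hσσ', zv0, pow_zero, one_smul, add_comm]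
    have ha1 : IsHomog σ 1 a1 := by
      unfold IsHomog
      rw [ha1def, map_smul, map_sub, hσσ', zv1, pow_one]
      match_scalars <;> ring
    have ha : a = a0 + a1 := by
      rw [ha0def, ha1def]; match_scalars <;> norm_num
    rw [ha, add_tmul]
    simp only [map_add]
    rw [key_pure hσσ hσbr hσα hskew hjac hmult hx hy ha0 b,
      key_pure hσσ hσbr hσα hskew hjac hmult hx hy ha1 b]
    module
  | add u v hu hv =>
    simp only [map_add, hu, hv]
    module
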